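/- Let θ ≥ 1/4 and μ > 0 be real numbers. Then every complex root r of the quadratic polynomial (1 + θμ)·z² − (2 − (1 − 2θ)μ)·z + (1 + θμ) satisfies |r| = 1 and has nonzero imaginary part; in particular the polynomial has two distinct complex-conjugate roots on the unit circle. -/

import Mathlib

/-- Unconditional stability of the implicit θ-scheme for the wave equation, θ ≥ 1/4:
every complex root of the characteristic polynomial
`(1+θμ)z² − (2−(1−2θ)μ)z + (1+θμ)` lies on the unit circle and has nonzero
imaginary part; in particular the polynomial has two distinct complex-conjugate
roots on the unit circle. -/
theorem stmt8 (θ μ : ℝ) (hθ : 1 / 4 ≤ θ) (hμ : 0 < μ) :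
    (∀ r : ℂ,
      ((1 + θ * μ : ℝ) : ℂ) * r ^ 2 - ((2 - (1 - 2 * θ) * μ : ℝ) : ℂ) * r
        + ((1 + θ * μ : ℝ) : ℂ) = 0 →
      ‖r‖ = 1 ∧ r.im ≠ 0) ∧
    ∃ r : ℂ,
      (((1 + θ * μ : ℝ) : ℂ) * r ^ 2 - ((2 - (1 - 2 * θ) * μ : ℝ) : ℂ) * r
          + ((1 + θ * μ : ℝ) : ℂ) = 0) ∧
      (((1 + θ * μ : ℝ) : ℂ) * (starRingEnd ℂ r) ^ 2
          - ((2 - (1 - 2 * θ) * μ : ℝ) : ℂ) * (starRingEnd ℂ r)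
          + ((1 + θ * μ : ℝ) : ℂ) = 0) ∧
      r ≠ starRingEnd ℂ r ∧ ‖r‖ = 1 := by
  have ha : (0:ℝ) < 1 + θ * μ := by nlinarith
  have haC : ((1 + θ * μ : ℝ) : ℂ) ≠ 0 := by exact_mod_cast ha.ne'
  have hconj : ∀ r : ℂ,
      ((1 + θ * μ : ℝ) : ℂ) * r ^ 2 - ((2 - (1 - 2 * θ) * μ : ℝ) : ℂ) * r
        + ((1 + θ * μ : ℝ) : ℂ) = 0 →
      ((1 + θ * μ : ℝ) : ℂ) * (starRingEnd ℂ r) ^ 2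
          - ((2 - (1 - 2 * θ) * μ : ℝ) : ℂ) * (starRingEnd ℂ r)
          + ((1 + θ * μ : ℝ) : ℂ) = 0 := by
    intro r hr
    have := congrArg (starRingEnd ℂ) hr
    simpa only [map_add, map_sub, map_mul, map_pow, Complex.conj_ofReal, map_zero] using this
  have main : ∀ r : ℂ,
      ((1 + θ * μ : ℝ) : ℂ) * r ^ 2 - ((2 - (1 - 2 * θ) * μ : ℝ) : ℂ) * r
        + ((1 + θ * μ : ℝ) : ℂ) = 0 →
      ‖r‖ = 1 ∧ r.im ≠ 0 := by
    intro r hr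
    have him : r.im ≠ 0 := by
      intro h0
      have hre : r = (r.re : ℂ) := Complex.ext rfl (by simp [h0])
      set x := r.re with hx
      rw [hre] at hr
      have hxeq : (1 + θ * μ) * x ^ 2 - (2 - (1 - 2 * θ) * μ) * x + (1 + θ * μ) = 0 := by
        exact_mod_cast hr
      have e1 : (1 + θ * μ) * (x - 1) ^ 2 + μ * x = 0 := by linear_combination hxeq
      have e2 : (1 + θ * μ) * (x + 1) ^ 2 - (4 + (4 * θ - 1) * μ) * x = 0 := by
        linear_combination hxeq
      have hc4 : 0 < 4 + (4 * θ - 1) * μ := by nlinarith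
      have hx0 : x ≤ 0 := by nlinarith [e1, mul_nonneg ha.le (sq_nonneg (x - 1))]
      have hx1 : 0 ≤ x := by nlinarith [e2, mul_nonneg ha.le (sq_nonneg (x + 1))]
      have hxz : x = 0 := le_antisymm hx0 hx1
      rw [hxz] at e1
      nlinarith [e1]
    have hc := hconj r hr
    have hne : r - starRingEnd ℂ r ≠ 0 := by
      rw [Complex.sub_conj]
      simp [Complex.ext_iff, him]
    have h1 : (r - starRingEnd ℂ r) *
        (((1 + θ * μ : ℝ) : ℂ) * (r + starRingEnd ℂ r) - ((2 - (1 - 2 * θ) * μ : ℝ) : ℂ)) = 0 := by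
      linear_combination hr - hc
    have h2 := (mul_eq_zero.1 h1).resolve_left hne
    have h3 : ((1 + θ * μ : ℝ) : ℂ) * (r * starRingEnd ℂ r - 1) = 0 := by
      linear_combination r * h2 - hr
    have h4 : r * starRingEnd ℂ r = 1 := by
      have := (mul_eq_zero.1 h3).resolve_left haC
      exact sub_eq_zero.1 this
    have habs : ‖r‖ * ‖r‖ = 1 := by
      have := congrArg (‖·‖) h4
      simpa [norm_mul, Complex.norm_conj] using this
    have : ‖r‖ = 1 := by nlinarith [norm_nonneg r]
    exact ⟨this, him⟩
  refine ⟨main, ?_⟩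
  set s : ℝ := Real.sqrt (4 * (1 + θ * μ) ^ 2 - (2 - (1 - 2 * θ) * μ) ^ 2) with hs_def
  have hc4' : 0 < 4 + (4 * θ - 1) * μ := by nlinarith
  have hD : 0 ≤ 4 * (1 + θ * μ) ^ 2 - (2 - (1 - 2 * θ) * μ) ^ 2 := by
    nlinarith [mul_pos hμ hc4']
  have hs : s ^ 2 = 4 * (1 + θ * μ) ^ 2 - (2 - (1 - 2 * θ) * μ) ^ 2 := Real.sq_sqrt hD
  have hsC : ((s : ℝ) : ℂ) ^ 2
      = 4 * ((1 + θ * μ : ℝ) : ℂ) ^ 2 - ((2 - (1 - 2 * θ) * μ : ℝ) : ℂ) ^ 2 := by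
    exact_mod_cast congrArg (Complex.ofReal) hs
  set r : ℂ := (((2 - (1 - 2 * θ) * μ : ℝ) : ℂ) + ((s : ℝ) : ℂ) * Complex.I)
      / (2 * ((1 + θ * μ : ℝ) : ℂ)) with hr_def
  have key : (((2 - (1 - 2 * θ) * μ : ℝ) : ℂ) + ((s : ℝ) : ℂ) * Complex.I) ^ 2
      - 2 * ((2 - (1 - 2 * θ) * μ : ℝ) : ℂ)
        * (((2 - (1 - 2 * θ) * μ : ℝ) : ℂ) + ((s : ℝ) : ℂ) * Complex.I)
      + 4 * ((1 + θ * μ : ℝ) : ℂ) ^ 2 = 0 := by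
    linear_combination (((s : ℝ) : ℂ)) ^ 2 * Complex.I_sq - hsC
  have hr : ((1 + θ * μ : ℝ) : ℂ) * r ^ 2 - ((2 - (1 - 2 * θ) * μ : ℝ) : ℂ) * r
      + ((1 + θ * μ : ℝ) : ℂ) = 0 := by
    rw [hr_def]
    have hA' : (1 : ℂ) + (θ : ℂ) * (μ : ℂ) ≠ 0 := by exact_mod_cast haC
    push_cast at key ⊢
    field_simp [hA']
    linear_combination key
  have him := (main r hr).2
  refine ⟨r, hr, hconj r hr, ?_, (main r hr).1⟩
  intro h
  exact him (Complex.conj_eq_iff_im.1 h.symm)
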